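/- With X as in the modal example system (X₁ = pqr, X₂ = -((p²-q²)r + γ₃)/2, X₃ = -(pq - q(p²+q²) + qγ₁ - pγ₂)/(2p²), X₄ = (p²+q²)qr + 2prγ₂ - qγ₃, X₅ = -2pq²r + pγ₃ - prγ₁, X₆ = (g₂pq + 4q(p²+q²)² + 4qγ₁(3p²-q²) + 4pγ₂(p²-3q²))/(8p²)) and ρ(p) = 1/(4p²), one has div(ρX) = 0 on the region p ≠ 0; i.e. ρ is the density of an invariant measure. -/

import Mathlib

theorem stmt_5 (g₂ : ℝ)
    (X₁ X₂ X₃ X₄ X₅ X₆ : ℝ → ℝ → ℝ → ℝ → ℝ → ℝ → ℝ) (ρ : ℝ → ℝ)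
    (hX₁ : ∀ p q r γ₁ γ₂ γ₃, X₁ p q r γ₁ γ₂ γ₃ = p*q*r)
    (hX₂ : ∀ p q r γ₁ γ₂ γ₃, X₂ p q r γ₁ γ₂ γ₃ = -((p^2-q^2)*r + γ₃)/2)
    (hX₃ : ∀ p q r γ₁ γ₂ γ₃, X₃ p q r γ₁ γ₂ γ₃ =
      -(p*q - q*(p^2+q^2) + q*γ₁ - p*γ₂)/(2*p^2))
    (hX₄ : ∀ p q r γ₁ γ₂ γ₃, X₄ p q r γ₁ γ₂ γ₃ = (p^2+q^2)*q*r + 2*p*r*γ₂ - q*γ₃)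
    (hX₅ : ∀ p q r γ₁ γ₂ γ₃, X₅ p q r γ₁ γ₂ γ₃ = -2*p*q^2*r + p*γ₃ - p*r*γ₁)
    (hX₆ : ∀ p q r γ₁ γ₂ γ₃, X₆ p q r γ₁ γ₂ γ₃ =
      (g₂*p*q + 4*q*(p^2+q^2)^2 + 4*q*γ₁*(3*p^2-q^2) + 4*p*γ₂*(p^2-3*q^2))/(8*p^2))
    (hρ : ∀ p, ρ p = 1/(4*p^2)) :
    ∀ p q r γ₁ γ₂ γ₃ : ℝ, p ≠ 0 →
      deriv (fun p' => ρ p' * X₁ p' q r γ₁ γ₂ γ₃) p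
      + deriv (fun q' => ρ p * X₂ p q' r γ₁ γ₂ γ₃) q
      + deriv (fun r' => ρ p * X₃ p q r' γ₁ γ₂ γ₃) r
      + deriv (fun γ₁' => ρ p * X₄ p q r γ₁' γ₂ γ₃) γ₁
      + deriv (fun γ₂' => ρ p * X₅ p q r γ₁ γ₂' γ₃) γ₂
      + deriv (fun γ₃' => ρ p * X₆ p q r γ₁ γ₂ γ₃') γ₃ = 0 := by
  intro p q r γ₁ γ₂ γ₃ hp
  -- term 1
  have hfun1 : (fun p' => ρ p' * X₁ p' q r γ₁ γ₂ γ₃)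
      = fun p' : ℝ => (q*r/4) * p'⁻¹ := by
    funext p'
    rw [hρ, hX₁]
    rcases eq_or_ne p' 0 with h | h
    · simp [h]
    · field_simp
  have h1 : deriv (fun p' => ρ p' * X₁ p' q r γ₁ γ₂ γ₃) p
      = (q*r/4) * (-(p^2)⁻¹) := by
    rw [hfun1]
    exact (((hasDerivAt_inv hp).const_mul (q*r/4)).deriv)
  -- term 2
  have h2fun : HasDerivAt (fun q' : ℝ => -((p^2 - q'^2)*r + γ₃)/2) (q*r) q := by
    have hsq : HasDerivAt (fun q' : ℝ => q'^2) (2*q) q := by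
      simpa using hasDerivAt_pow 2 q
    have := ((((hasDerivAt_const q (p^2)).sub hsq).mul_const r).add_const γ₃).neg.div_const 2
    exact this.congr_deriv (by ring)
  have h2 : deriv (fun q' => ρ p * X₂ p q' r γ₁ γ₂ γ₃) q = ρ p * (q*r) := by
    simp only [hX₂]
    rw [deriv_const_mul_field, h2fun.deriv]
  rw [h1, h2, hρ]
  simp only [hX₃, hX₄, hX₅, hX₆]
  rw [deriv_const, deriv_const, deriv_const, deriv_const]
  field_simp
  ring
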